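/- In the cubic ring R_f associated to the binary cubic form f = ax³ + bx²y + cxy² + dy³ (with multiplication ωθ = −ad, ω² = −ac + bω − aθ, θ² = −bd + dω − cθ), the discriminant of the basis 1, ω, θ (the determinant of the trace form matrix (Tr(ζiζj))) equals the discriminant b²c² − 4ac³ − 4b³d − 27a²d² + 18abcd of the cubic form f. -/
import Mathlib


/-- Multiplication of the cubic ring `R_f` of the binary cubic form
`f = a x³ + b x²y + c xy² + d y³`, on coordinate triples with respect to the basis `1, ω, θ`:
`ωθ = −ad`, `ω² = −ac + bω − aθ`, `θ² = −bd + dω − cθ`. -/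
def cubicMul (a b c d : ℤ) (x y : ℤ × ℤ × ℤ) : ℤ × ℤ × ℤ :=
  let x0 := x.1; let x1 := x.2.1; let x2 := x.2.2
  let y0 := y.1; let y1 := y.2.1; let y2 := y.2.2
  ( x0*y0 + (x1*y1) * (-(a*c)) + (x1*y2 + x2*y1) * (-(a*d)) + (x2*y2) * (-(b*d)),
    x0*y1 + y0*x1 + (x1*y1) * b + (x2*y2) * d,
    x0*y2 + y0*x2 + (x1*y1) * (-a) + (x2*y2) * (-c) )

/-- The trace of multiplication by `r` on `R_f`, computed as the trace of the matrix of the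
multiplication-by-`r` map in the basis `1, ω, θ`. -/
def cubicTr (a b c d : ℤ) (r : ℤ × ℤ × ℤ) : ℤ :=
  (cubicMul a b c d r (1,0,0)).1 + (cubicMul a b c d r (0,1,0)).2.1
    + (cubicMul a b c d r (0,0,1)).2.2

/-- The basis `ζ₁, ζ₂, ζ₃ = 1, ω, θ` of `R_f`. -/
def cubicBasis : Fin 3 → ℤ × ℤ × ℤ := ![(1,0,0), (0,1,0), (0,0,1)]

/-- The discriminant of the cubic ring `R_f` with respect to the basis `1, ω, θ` — the
determinant of the trace form matrix `(Tr(ζᵢζⱼ))` — equals the discriminant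
`b²c² − 4ac³ − 4b³d − 27a²d² + 18abcd` of the binary cubic form `f = ax³ + bx²y + cxy² + dy³`. -/
theorem cubic_ring_disc_eq_disc_form (a b c d : ℤ) :
    (Matrix.of fun i j : Fin 3 =>
      cubicTr a b c d (cubicMul a b c d (cubicBasis i) (cubicBasis j))).det
      = b^2*c^2 - 4*a*c^3 - 4*b^3*d - 27*a^2*d^2 + 18*a*b*c*d := by
  simp only [Matrix.det_fin_three, cubicBasis, cubicMul, cubicTr, Matrix.of_apply]
  simp [Matrix.cons_val_zero, Matrix.cons_val_one]
  ring
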